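/- Let X be a compact topological space endowed with two continuous functions φ: X → ℝⁿ and ψ: X → ℝⁿ. Then for every integer k, d_T(H_k^{(X,φ)}, H_k^{(X,ψ)}) ≤ ‖φ − ψ‖_∞; that is, the pseudo-distance d_T is stable with respect to perturbations of the filtering function measured by the max-norm. -/

import Mathlib

open CategoryTheory

/-- The "chains with coefficients in `G`" functor `S ↦ S →₀ G`. -/
@[simps]
noncomputable def coeffFunctor (G : Type) [AddCommGroup G] : Type ⥤ AddCommGrpCat where
  obj S := AddCommGrpCat.of (S →₀ G)
  map f := AddCommGrpCat.ofHom (Finsupp.mapDomain.addMonoidHom f)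
  map_id S := AddCommGrpCat.hom_ext Finsupp.mapDomain.addMonoidHom_id
  map_comp f g := AddCommGrpCat.hom_ext (Finsupp.mapDomain.addMonoidHom_comp g f)

/-- The singular chain complex with coefficients in the abelian group `G`. -/
noncomputable def singularChainComplexFunctor (G : Type) [AddCommGroup G] :
    TopCat.{0} ⥤ ChainComplex AddCommGrpCat ℕ :=
  TopCat.toSSet ⋙ ((SimplicialObject.whiskering (Type 0) AddCommGrpCat).obj (coeffFunctor G)) ⋙
    AlgebraicTopology.alternatingFaceMapComplex AddCommGrpCat

/-- Singular homology with coefficients in `G`, in degree `k : ℤ` (trivial in negative degrees). -/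
noncomputable def singularHomologyFunctor (G : Type) [AddCommGroup G] (k : ℤ) :
    TopCat.{0} ⥤ AddCommGrpCat :=
  if 0 ≤ k then
    singularChainComplexFunctor G ⋙ HomologicalComplex.homologyFunctor AddCommGrpCat _ k.toNat
  else (Functor.const _).obj (AddCommGrpCat.of PUnit)

/-- The sublevel set `X⟨φ ≼ u⟩`. -/
def sublevelSet {n : ℕ} {X : Type} (φ : X → Fin n → ℝ) (u : Fin n → ℝ) : Set X :=
  {x | ∀ i, φ x i ≤ u i}

/-- The sublevel set as a topological space. -/
def sublevelTop {n : ℕ} {X : Type} [TopologicalSpace X] (φ : X → Fin n → ℝ)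
    (u : Fin n → ℝ) : TopCat.{0} :=
  TopCat.of (sublevelSet φ u)

/-- The inclusion of sublevel sets. -/
def sublevelIncl {n : ℕ} {X : Type} [TopologicalSpace X] (φ : X → Fin n → ℝ)
    {u v : Fin n → ℝ} (h : ∀ i, u i ≤ v i) : sublevelTop φ u ⟶ sublevelTop φ v :=
  TopCat.ofHom (ContinuousMap.mk
    (Set.inclusion (s := sublevelSet φ u) (t := sublevelSet φ v)
      (fun _x hx i => le_trans (hx i) (h i)))
    (continuous_inclusion _))

/-- The multidimensional `k`-th persistent homology group of `(X, φ)` at `(u, v)`,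
with coefficients in the abelian group `G`: the image of the homomorphism induced
in homology by the inclusion of sublevel sets. -/
noncomputable def persistentHomologyGroup (G : Type) [AddCommGroup G] (k : ℤ)
    {n : ℕ} {X : Type} [TopologicalSpace X] (φ : X → Fin n → ℝ)
    {u v : Fin n → ℝ} (h : ∀ i, u i ≤ v i) : Type :=
  AddMonoidHom.range ((singularHomologyFunctor G k).map (sublevelIncl φ h)).hom

noncomputable instance (G : Type) [AddCommGroup G] (k : ℤ)
    {n : ℕ} {X : Type} [TopologicalSpace X] (φ : X → Fin n → ℝ)
    {u v : Fin n → ℝ} (h : ∀ i, u i ≤ v i) :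
    AddCommGroup (persistentHomologyGroup G k φ h) := by
  unfold persistentHomologyGroup; infer_instance

/-- There is a surjective homomorphism from a subgroup of `A` onto `B`. -/
def ExistsSurjHomFromSubgroup (A B : Type) [AddCommGroup A] [AddCommGroup B] : Prop :=
  ∃ (S : AddSubgroup A) (f : S →+ B), Function.Surjective f

/-- The set `E` of all `ε ≥ 0` such that, for every `(u,v) ∈ Δ⁺`, surjective homomorphisms
exist from a subgroup of `H_k^{(X,φ)}(u,v)` onto `H_k^{(Y,ψ)}(u-ε⃗,v+ε⃗)` and from a subgroup of
`H_k^{(Y,ψ)}(u,v)` onto `H_k^{(X,φ)}(u-ε⃗,v+ε⃗)`. -/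
def dTSet (G : Type) [AddCommGroup G] (k : ℤ) {n : ℕ} {X Y : Type}
    [TopologicalSpace X] [TopologicalSpace Y]
    (φ : X → Fin n → ℝ) (ψ : Y → Fin n → ℝ) : Set ℝ :=
  {ε | ∃ hε : 0 ≤ ε, ∀ u v : Fin n → ℝ, ∀ h : ∀ i, u i < v i,
    ExistsSurjHomFromSubgroup
      (persistentHomologyGroup G k φ (fun i => (h i).le))
      (persistentHomologyGroup G k ψ
        (u := fun i => u i - ε) (v := fun i => v i + ε)
        (fun i => by have := (h i).le; linarith)) ∧
    ExistsSurjHomFromSubgroup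
      (persistentHomologyGroup G k ψ (fun i => (h i).le))
      (persistentHomologyGroup G k φ
        (u := fun i => u i - ε) (v := fun i => v i + ε)
        (fun i => by have := (h i).le; linarith))}

/-- The pseudo-distance `d_T` between the `k`-th persistent homology groups of `(X,φ)`
and `(Y,ψ)`: the infimum of the set `E` (`∞` if `E` is empty). -/
noncomputable def dT (G : Type) [AddCommGroup G] (k : ℤ) {n : ℕ} {X Y : Type}
    [TopologicalSpace X] [TopologicalSpace Y]
    (φ : X → Fin n → ℝ) (ψ : Y → Fin n → ℝ) : ENNReal :=
  sInf (ENNReal.ofReal '' dTSet G k φ ψ)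

/-- The sup-norm (max-norm) distance between two `ℝⁿ`-valued functions. -/
noncomputable def supNormDist {n : ℕ} {X : Type} (φ ψ : X → Fin n → ℝ) : ENNReal :=
  ⨆ (x : X) (i : Fin n), ENNReal.ofReal |φ x i - ψ x i|

/-- The natural pseudo-distance between `(X,φ)` and `(Y,ψ)`:
`inf_h ‖φ - ψ ∘ h‖_∞` over all homeomorphisms `h : X → Y` (`∞` if none exists). -/
noncomputable def naturalPseudoDistance {n : ℕ} {X Y : Type}
    [TopologicalSpace X] [TopologicalSpace Y]
    (φ : X → Fin n → ℝ) (ψ : Y → Fin n → ℝ) : ENNReal :=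
  ⨅ (h : X ≃ₜ Y), supNormDist φ (fun x => ψ (h x))

section Aux

lemma exists_surj_of_factor {A B C D : Type} [AddCommGroup A] [AddCommGroup B]
    [AddCommGroup C] [AddCommGroup D] (p : A →+ B) (q : B →+ C) (r : C →+ D) :
    ExistsSurjHomFromSubgroup ↥q.range ↥((r.comp (q.comp p)).range) := by
  refine ⟨AddSubgroup.comap q.range.subtype (q.comp p).range,
    AddMonoidHom.codRestrict
      (r.comp (q.range.subtype.comp
        (AddSubgroup.comap q.range.subtype (q.comp p).range).subtype)) _ ?_, ?_⟩
  · rintro ⟨⟨c, hc⟩, a, ha⟩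
    exact ⟨a, congrArg r ha⟩
  · rintro ⟨d, a, ha⟩
    refine ⟨⟨⟨q (p a), ⟨p a, rfl⟩⟩, ⟨a, rfl⟩⟩, ?_⟩
    apply Subtype.ext
    exact ha

/-- The inclusion between sublevel sets of (possibly different) functions. -/
def crossIncl {n : ℕ} {X : Type} [TopologicalSpace X] (φ ψ : X → Fin n → ℝ)
    {u w : Fin n → ℝ} (h : sublevelSet φ u ⊆ sublevelSet ψ w) :
    sublevelTop φ u ⟶ sublevelTop ψ w :=
  TopCat.ofHom (ContinuousMap.mk (Set.inclusion h) (continuous_inclusion h))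

lemma sublevelIncl_factor {n : ℕ} {X : Type} [TopologicalSpace X]
    (φ ψ : X → Fin n → ℝ) {u v : Fin n → ℝ} (ε : ℝ) (h : ∀ i, u i ≤ v i)
    (h1 : sublevelSet ψ (fun i => u i - ε) ⊆ sublevelSet φ u)
    (h3 : sublevelSet φ v ⊆ sublevelSet ψ (fun i => v i + ε))
    (hbig : ∀ i, (fun i => u i - ε) i ≤ (fun i => v i + ε) i) :
    sublevelIncl ψ hbig = crossIncl ψ φ h1 ≫ sublevelIncl φ h ≫ crossIncl φ ψ h3 := by
  ext x
  rfl

lemma surj_side (G : Type) [AddCommGroup G] (k : ℤ) {n : ℕ} {X : Type}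
    [TopologicalSpace X] (φ ψ : X → Fin n → ℝ) (ε : ℝ)
    (hb : ∀ x i, |φ x i - ψ x i| ≤ ε) (u v : Fin n → ℝ) (h : ∀ i, u i ≤ v i)
    (hbig : ∀ i, (fun i => u i - ε) i ≤ (fun i => v i + ε) i) :
    ExistsSurjHomFromSubgroup (persistentHomologyGroup G k φ h)
      (persistentHomologyGroup G k ψ hbig) := by
  have h1 : sublevelSet ψ (fun i => u i - ε) ⊆ sublevelSet φ u := by
    intro x hx i
    have hxi := hx i
    have habs := abs_le.mp (hb x i)
    dsimp only at hxi ⊢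
    linarith [habs.1]
  have h3 : sublevelSet φ v ⊆ sublevelSet ψ (fun i => v i + ε) := by
    intro x hx i
    have hxi := hx i
    have habs := abs_le.mp (hb x i)
    dsimp only at hxi ⊢
    linarith [habs.1]
  show ExistsSurjHomFromSubgroup
    ↥(AddMonoidHom.range ((singularHomologyFunctor G k).map (sublevelIncl φ h)).hom)
    ↥(AddMonoidHom.range ((singularHomologyFunctor G k).map (sublevelIncl ψ hbig)).hom)
  rw [sublevelIncl_factor φ ψ ε h h1 h3 hbig, Functor.map_comp, Functor.map_comp]
  exact exists_surj_of_factor ((singularHomologyFunctor G k).map (crossIncl ψ φ h1)).hom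
    ((singularHomologyFunctor G k).map (sublevelIncl φ h)).hom
    ((singularHomologyFunctor G k).map (crossIncl φ ψ h3)).hom

lemma mem_dTSet_of_bound (G : Type) [AddCommGroup G] (k : ℤ) {n : ℕ} {X : Type}
    [TopologicalSpace X] (φ ψ : X → Fin n → ℝ) (ε : ℝ) (hε : 0 ≤ ε)
    (hb : ∀ x i, |φ x i - ψ x i| ≤ ε) : ε ∈ dTSet G k φ ψ := by
  have hb' : ∀ x i, |ψ x i - φ x i| ≤ ε := fun x i => by
    rw [abs_sub_comm]; exact hb x i
  exact ⟨hε, fun u v h =>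
    ⟨surj_side G k φ ψ ε hb u v (fun i => (h i).le) _,
     surj_side G k ψ φ ε hb' u v (fun i => (h i).le) _⟩⟩

end Aux

/-- **Corollary (stability of `d_T`).** Let `X` be a compact topological space endowed with
two continuous functions `φ, ψ : X → ℝⁿ`. Then, for every integer `k`,
`d_T(H_k^{(X,φ)}, H_k^{(X,ψ)}) ≤ ‖φ − ψ‖_∞`. -/
theorem dT_le_supNormDist (G : Type) [AddCommGroup G] (k : ℤ) (n : ℕ)
    {X : Type} [TopologicalSpace X] [CompactSpace X]
    (φ ψ : X → Fin n → ℝ) (hφ : Continuous φ) (hψ : Continuous ψ) :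
    dT G k φ ψ ≤ supNormDist φ ψ := by
  set M := supNormDist φ ψ with hM
  apply ENNReal.le_of_forall_pos_le_add
  intro δ hδ hMlt
  set ε : ℝ := M.toReal + δ with hεdef
  have hε0 : (0 : ℝ) ≤ ε := by positivity
  have hb : ∀ x i, |φ x i - ψ x i| ≤ ε := by
    intro x i
    have h1 : ENNReal.ofReal |φ x i - ψ x i| ≤ M := by
      rw [hM]
      exact le_trans (le_iSup (fun i => ENNReal.ofReal |φ x i - ψ x i|) i)
        (le_iSup (fun x => ⨆ i, ENNReal.ofReal |φ x i - ψ x i|) x)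
    have h2 : |φ x i - ψ x i| ≤ M.toReal :=
      (ENNReal.ofReal_le_iff_le_toReal hMlt.ne).mp h1
    have : (0 : ℝ) ≤ (δ : ℝ) := δ.coe_nonneg
    linarith
  have hmem : ε ∈ dTSet G k φ ψ := mem_dTSet_of_bound G k φ ψ ε hε0 hb
  have hle : dT G k φ ψ ≤ ENNReal.ofReal ε :=
    sInf_le ⟨ε, hmem, rfl⟩
  calc dT G k φ ψ ≤ ENNReal.ofReal ε := hle
    _ = ENNReal.ofReal M.toReal + ENNReal.ofReal δ := by
        rw [hεdef, ENNReal.ofReal_add ENNReal.toReal_nonneg δ.coe_nonneg]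
    _ = M + δ := by rw [ENNReal.ofReal_toReal hMlt.ne, ENNReal.ofReal_coe_nnreal]
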